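/- Write vectors in R^5 as (a; b_1, b_2, b_3, b_4). Let S ⊂ R^5 consist of the vectors (0; e_i) for i = 1,…,4 (where e_i is the i-th standard basis vector of R^4) and the vectors (1; −e_i − e_j) for all 1 ≤ i < j ≤ 4. Then the vector (3; −2,−2,−2,−1) does not belong to the convex cone generated by S. -/

import Mathlib

open scoped NNReal

/-- Divisor classes `aH + Σ bᵢ Eᵢ` on the blowup of P^5 along 4 general lines,
written as vectors `(a; b₁, b₂, b₃, b₄)`. -/
abbrev DivVec : Type := ℝ × (Fin 4 → ℝ)

/-- The classes of linear divisors: the exceptional divisors `(0; eᵢ)` and the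
hyperplanes containing two of the lines `(1; −eᵢ − eⱼ)` for `i < j`. -/
def linDivisors : Set DivVec :=
  {w | (∃ i : Fin 4, w = ((0 : ℝ), fun x => if x = i then (1 : ℝ) else 0)) ∨
    (∃ i j : Fin 4, i < j ∧
      w = ((1 : ℝ), fun x => if x = i ∨ x = j then (-1 : ℝ) else 0))}

/-- The class `3H − 2E₁ − 2E₂ − 2E₃ − E₄` of a cubic fourfold double along three of
the lines and containing the fourth is not in the convex cone generated by the
linear divisor classes: the cone of effective divisors on the blowup of P^5 along
4 general lines is not linearly generated. -/
theorem stmt16 :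
    ((3 : ℝ), ![-2,-2,-2,-1]) ∉ Submodule.span ℝ≥0 linDivisors := by
  intro h
  have key : ∀ w : DivVec, w ∈ Submodule.span ℝ≥0 linDivisors →
      0 ≤ 4 * w.1 + 2 * w.2 0 + 2 * w.2 1 + 2 * w.2 2 + w.2 3 := by
    intro w hw
    induction hw using Submodule.span_induction with
    | mem x hx =>
      rcases hx with ⟨i, rfl⟩ | ⟨i, j, hij, rfl⟩
      · fin_cases i <;> norm_num (config := { decide := true }) [Fin.ext_iff]
      · fin_cases i <;> fin_cases j <;> simp_all <;> norm_num (config := { decide := true }) [Fin.ext_iff]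
    | zero => simp
    | add x y _ _ hx hy =>
      simp only [Prod.fst_add, Prod.snd_add, Pi.add_apply]
      linarith
    | smul c x _ hx =>
      simp only [Prod.smul_fst, Prod.smul_snd, Pi.smul_apply, NNReal.smul_def,
        smul_eq_mul]
      have hc : (0 : ℝ) ≤ (c : ℝ) := c.coe_nonneg
      nlinarith
  have := key _ h
  norm_num [Matrix.cons_val_zero, Matrix.cons_val_one, Matrix.cons_val_two, Matrix.cons_val_three] at this
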